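/- Let Q be a finite quiver. A finite-dimensional representation V of Q is nilpotent (i.e., V_ω is a nilpotent endomorphism for every oriented cycle ω) if and only if there exists a positive integer r such that V_ω = 0 for every path ω in Q of length ≥ r. -/

import Mathlib

/-- Evaluation of a representation on a path: `pathMap f (α_m … α_1) = f α_m ∘ … ∘ f α_1`. -/
def pathMap {k : Type*} [Field k] {Q : Type*} [Quiver Q] {V : Q → Type*}
    [∀ i, AddCommGroup (V i)] [∀ i, Module k (V i)]
    (f : ∀ {i j : Q}, (i ⟶ j) → (V i →ₗ[k] V j)) :
    ∀ {i j : Q}, Quiver.Path i j → (V i →ₗ[k] V j)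
  | _, _, Quiver.Path.nil => LinearMap.id
  | _, _, Quiver.Path.cons p a => (f a).comp (pathMap f p)


open Module LinearMap

private lemma map_stable_eq_bot {K W : Type*} [Field K] [AddCommGroup W] [Module K W]
    {a : Module.End K W} (ha : IsNilpotent a) {P : Submodule K W}
    (h : P.map a = P) : P = ⊥ := by
  obtain ⟨n, hn⟩ := ha
  have key : ∀ m : ℕ, P.map (a ^ m) = P := by
    intro m
    induction m with
    | zero => rw [pow_zero, Module.End.one_eq_id, Submodule.map_id]
    | succ m ih =>
      rw [pow_succ', Module.End.mul_eq_comp, Submodule.map_comp, ih, h]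
  have h2 := key n
  rw [hn, Submodule.map_zero] at h2
  exact h2.symm

private lemma levitzki (n : ℕ) {K : Type*} [Field K] :
    ∀ (W : Type*) [AddCommGroup W] [Module K W] [FiniteDimensional K W],
    Module.finrank K W ≤ n → ∀ S : Set (Module.End K W),
    (∀ a ∈ S, ∀ b ∈ S, a * b ∈ S) → (∀ s ∈ S, IsNilpotent s) →
    ∀ L : List (Module.End K W), (∀ x ∈ L, x ∈ S) → Module.finrank K W ≤ L.length →
    L.prod = 0 := by
  induction n using Nat.strong_induction_on with
  | _ n IH =>
  intro W _ _ _ hWn S hmul hnil L hL hlen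
  classical
  by_cases h0 : Module.finrank K W = 0
  · have hsub : Subsingleton W := by
      rw [finrank_zero_iff_forall_zero] at h0
      exact ⟨fun a b => (h0 a).trans (h0 b).symm⟩
    exact LinearMap.ext fun x => Subsingleton.elim _ _
  by_cases hz : ∀ s ∈ S, s = 0
  · have h1 : 1 ≤ L.length := le_trans (Nat.one_le_iff_ne_zero.mpr h0) hlen
    obtain ⟨x, t, rfl⟩ := List.exists_cons_of_ne_nil (List.length_pos_iff.mp h1)
    rw [List.prod_cons, hz x (hL x (List.mem_cons_self)), zero_mul]
  push_neg at hz
  obtain ⟨s₀, hs₀S, hs₀⟩ := hz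
  -- pick s of minimal positive rank
  obtain ⟨s, hsS, hs0, hrank⟩ :
      ∃ s, s ∈ S ∧ s ≠ 0 ∧ Module.finrank K (LinearMap.range s) =
        sInf {m | ∃ t, t ∈ S ∧ t ≠ 0 ∧ Module.finrank K (LinearMap.range t) = m} := by
    have := Nat.sInf_mem (s := {m | ∃ t, t ∈ S ∧ t ≠ 0 ∧ Module.finrank K (LinearMap.range t) = m})
      ⟨_, s₀, hs₀S, hs₀, rfl⟩
    obtain ⟨t, ht, ht0, htr⟩ := this
    exact ⟨t, ht, ht0, htr⟩
  have hmin : ∀ t, t ∈ S → t ≠ 0 →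
      Module.finrank K (LinearMap.range s) ≤ Module.finrank K (LinearMap.range t) := by
    intro t ht ht0
    rw [hrank]
    exact Nat.sInf_le ⟨t, ht, ht0, rfl⟩
  have claim : ∀ a : Module.End K W, IsNilpotent a → a * s ∈ S →
      LinearMap.range (a * s) ≤ LinearMap.range s → a * s = 0 := by
    intro a ha haS hle
    by_contra hne
    have h1 : Module.finrank K (LinearMap.range s) ≤ Module.finrank K (LinearMap.range (a * s)) :=
      hmin _ haS hne
    have h2 : LinearMap.range (a * s) = LinearMap.range s :=
      Submodule.eq_of_le_of_finrank_le hle h1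
    have h3 : (LinearMap.range s).map a = LinearMap.range s := by
      rw [← LinearMap.range_comp, ← Module.End.mul_eq_comp, h2]
    exact hs0 (LinearMap.range_eq_bot.mp (map_stable_eq_bot ha h3))
  have hss : s * s = 0 :=
    claim s (hnil s hsS) (hmul s hsS s hsS)
      (by rw [Module.End.mul_eq_comp, LinearMap.range_comp]; exact LinearMap.map_le_range)
  have hsts : ∀ t ∈ S, (s * t) * s = 0 := by
    intro t ht
    refine claim (s * t) (hnil _ (hmul s hsS t ht)) (hmul _ (hmul s hsS t ht) s hsS) ?_
    rw [mul_assoc, Module.End.mul_eq_comp, LinearMap.range_comp]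
    exact LinearMap.map_le_range
  set U : Submodule K W :=
    LinearMap.range s ⊔ ⨆ t ∈ S, (LinearMap.range s).map t with hU
  have hUinv : ∀ u ∈ S, ∀ x ∈ U, u x ∈ U := by
    intro u hu
    have : U.map u ≤ U := by
      rw [hU, Submodule.map_sup]
      apply sup_le
      · exact le_sup_of_le_right
          (le_iSup₂ (f := fun t (_ : t ∈ S) => (LinearMap.range s).map t) u hu)
      · rw [Submodule.map_iSup]
        refine iSup_le fun t => ?_
        rw [Submodule.map_iSup]
        refine iSup_le fun ht => ?_
        rw [← Submodule.map_comp, ← Module.End.mul_eq_comp]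
        exact le_sup_of_le_right
          (le_iSup₂ (f := fun t (_ : t ∈ S) => (LinearMap.range s).map t) (u * t)
            (hmul u hu t ht))
    exact fun x hx => this (Submodule.mem_map_of_mem hx)
  have hUker : U ≤ LinearMap.ker s := by
    rw [hU]
    apply sup_le
    · rw [LinearMap.range_le_ker_iff, ← Module.End.mul_eq_comp]
      exact hss
    · refine iSup₂_le fun t ht => ?_
      rw [← LinearMap.range_comp, ← Module.End.mul_eq_comp, LinearMap.range_le_ker_iff,
        ← Module.End.mul_eq_comp, ← mul_assoc]
      exact hsts t ht
  have hUbot : U ≠ ⊥ := by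
    intro hbot
    apply hs0
    rw [← LinearMap.range_eq_bot]
    exact le_bot_iff.mp (hbot ▸ (le_sup_left : LinearMap.range s ≤ U))
  have hUtop : U ≠ ⊤ := by
    intro htop
    apply hs0
    have : LinearMap.ker s = ⊤ := top_le_iff.mp (htop ▸ hUker)
    exact LinearMap.ker_eq_top.mp this
  have hU_lt : Module.finrank K U < Module.finrank K W :=
    Submodule.finrank_lt hUtop
  have hUpos : 0 < Module.finrank K U := by
    rcases (Submodule.ne_bot_iff U).mp hUbot with ⟨x, hxU, hx0⟩
    rcases Nat.eq_zero_or_pos (Module.finrank K U) with h | h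
    · rw [finrank_zero_iff_forall_zero] at h
      exact absurd (congrArg Subtype.val (h ⟨x, hxU⟩)) hx0
    · exact h
  have hdims := Submodule.finrank_quotient_add_finrank U
  have hQ_lt : Module.finrank K (W ⧸ U) < Module.finrank K W := by omega
  -- restriction to U
  set resU : Module.End K W → Module.End K U := fun u =>
    if h : ∀ x ∈ U, u x ∈ U then u.restrict h else 0 with hresU
  have hres : ∀ u ∈ S, ∀ x : U, (resU u x : W) = u x := by
    intro u hu x
    rw [hresU]
    simp only [dif_pos (hUinv u hu)]
    exact LinearMap.restrict_coe_apply _ _ _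
  have hmulU : ∀ a ∈ resU '' S, ∀ b ∈ resU '' S, a * b ∈ resU '' S := by
    rintro _ ⟨a, ha, rfl⟩ _ ⟨b, hb, rfl⟩
    refine ⟨a * b, hmul a ha b hb, ?_⟩
    refine LinearMap.ext fun x => Subtype.val_injective ?_
    rw [Module.End.mul_apply, hres _ (hmul a ha b hb), hres a ha, hres b hb,
      Module.End.mul_apply]
  have hnilU : ∀ g ∈ resU '' S, IsNilpotent g := by
    rintro _ ⟨u, hu, rfl⟩
    obtain ⟨m, hm⟩ := hnil u hu
    refine ⟨m, ?_⟩
    have heq : resU u = u.restrict (hUinv u hu) := by rw [hresU]; exact dif_pos (hUinv u hu)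
    rw [heq, Module.End.pow_restrict]
    refine LinearMap.ext fun x => Subtype.val_injective ?_
    rw [LinearMap.restrict_coe_apply, hm]
    rfl
  -- quotient by U
  set qU : Module.End K W → Module.End K (W ⧸ U) := fun u =>
    if h : U ≤ U.comap u then Submodule.mapQ U U u h else 0 with hqU
  have hq : ∀ u ∈ S, ∀ x : W,
      qU u (Submodule.Quotient.mk x) = Submodule.Quotient.mk (u x) := by
    intro u hu x
    have hcom : U ≤ U.comap u := fun y hy => (Submodule.mem_comap).mpr (hUinv u hu y hy)
    have heq : qU u = Submodule.mapQ U U u hcom := by rw [hqU]; exact dif_pos hcom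
    rw [heq]
    rfl
  have hmulQ : ∀ a ∈ qU '' S, ∀ b ∈ qU '' S, a * b ∈ qU '' S := by
    rintro _ ⟨a, ha, rfl⟩ _ ⟨b, hb, rfl⟩
    refine ⟨a * b, hmul a ha b hb, ?_⟩
    refine LinearMap.ext fun y => ?_
    obtain ⟨x, rfl⟩ := Submodule.Quotient.mk_surjective U y
    rw [Module.End.mul_apply, hq _ (hmul a ha b hb), hq b hb, hq a ha, Module.End.mul_apply]
  have hqpow : ∀ u ∈ S, ∀ (j : ℕ) (x : W),
      (qU u ^ j) (Submodule.Quotient.mk x) = Submodule.Quotient.mk ((u ^ j) x) := by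
    intro u hu j
    induction j with
    | zero => intro x; simp
    | succ j ih =>
      intro x
      rw [pow_succ, Module.End.mul_apply, hq u hu, ih, pow_succ, Module.End.mul_apply]
  have hnilQ : ∀ g ∈ qU '' S, IsNilpotent g := by
    rintro _ ⟨u, hu, rfl⟩
    obtain ⟨m, hm⟩ := hnil u hu
    refine ⟨m, ?_⟩
    refine LinearMap.ext fun y => ?_
    obtain ⟨x, rfl⟩ := Submodule.Quotient.mk_surjective U y
    rw [hqpow u hu m x, hm]
    simp
  -- lifting products
  have clA : ∀ (L' : List (Module.End K W)), (∀ x ∈ L', x ∈ S) → ∀ x : W,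
      Submodule.Quotient.mk (L'.prod x) = (L'.map qU).prod (Submodule.Quotient.mk x) := by
    intro L'
    induction L' with
    | nil => intro _ x; simp
    | cons a t ih =>
      intro hmem x
      rw [List.prod_cons, List.map_cons, List.prod_cons, Module.End.mul_apply,
        Module.End.mul_apply, ← ih (fun y hy => hmem y (List.mem_cons_of_mem a hy)) x,
        hq a (hmem a (List.mem_cons_self))]
  have clB : ∀ (L' : List (Module.End K W)), (∀ x ∈ L', x ∈ S) → ∀ x : U,
      L'.prod (x : W) = ((L'.map resU).prod x : W) := by
    intro L'
    induction L' with
    | nil => intro _ x; simp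
    | cons a t ih =>
      intro hmem x
      rw [List.prod_cons, List.map_cons, List.prod_cons, Module.End.mul_apply,
        Module.End.mul_apply, ih (fun y hy => hmem y (List.mem_cons_of_mem a hy)) x,
        hres a (hmem a (List.mem_cons_self))]
  -- assembly
  set d1 := Module.finrank K U with hd1
  set d2 := Module.finrank K (W ⧸ U) with hd2
  have hsplit : L = L.take d1 ++ L.drop d1 := (List.take_append_drop _ _).symm
  have hmem1 : ∀ x ∈ L.take d1, x ∈ S := fun x hx => hL x (List.mem_of_mem_take hx)
  have hmem2 : ∀ x ∈ L.drop d1, x ∈ S := fun x hx => hL x (List.mem_of_mem_drop hx)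
  have hlen1 : (L.take d1).length = d1 := by
    rw [List.length_take]
    omega
  have hlen2 : d2 ≤ (L.drop d1).length := by
    rw [List.length_drop]
    omega
  have hq0 : ((L.drop d1).map qU).prod = 0 := by
    refine IH d2 (lt_of_lt_of_le hQ_lt hWn) (W ⧸ U) le_rfl (qU '' S) hmulQ hnilQ _ ?_ ?_
    · intro x hx
      obtain ⟨y, hy, rfl⟩ := List.mem_map.mp hx
      exact ⟨y, hmem2 y hy, rfl⟩
    · rw [List.length_map]; exact hlen2
  have hr0 : ((L.take d1).map resU).prod = 0 := by
    refine IH d1 (lt_of_lt_of_le hU_lt hWn) U le_rfl (resU '' S) hmulU hnilU _ ?_ ?_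
    · intro x hx
      obtain ⟨y, hy, rfl⟩ := List.mem_map.mp hx
      exact ⟨y, hmem1 y hy, rfl⟩
    · rw [List.length_map, hlen1]
  refine LinearMap.ext fun x => ?_
  have hstep1 : (L.drop d1).prod x ∈ U := by
    have := clA (L.drop d1) hmem2 x
    rw [hq0] at this
    exact (Submodule.Quotient.mk_eq_zero U).mp (by simpa using this)
  have hstep2 : (L.take d1).prod ((L.drop d1).prod x) = 0 := by
    have := clB (L.take d1) hmem1 ⟨(L.drop d1).prod x, hstep1⟩
    rw [hr0] at this
    simpa using this
  conv_lhs => rw [hsplit]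
  rw [List.prod_append, Module.End.mul_apply, hstep2]
  rfl


section Aux

variable {k : Type*} [Field k] {Q : Type*} [Quiver Q] {V : Q → Type*}
  [∀ i, AddCommGroup (V i)] [∀ i, Module k (V i)]

private lemma pathMap_cons (f : ∀ {i j : Q}, (i ⟶ j) → (V i →ₗ[k] V j))
    {i j l : Q} (q : Quiver.Path i j) (a : j ⟶ l) :
    pathMap f (q.cons a) = (f a).comp (pathMap f q) := by
  simp [pathMap]

private lemma pathMap_nil (f : ∀ {i j : Q}, (i ⟶ j) → (V i →ₗ[k] V j)) {i : Q} :
    pathMap f (Quiver.Path.nil (a := i)) = LinearMap.id := by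
  simp [pathMap]

private lemma pathMap_comp (f : ∀ {i j : Q}, (i ⟶ j) → (V i →ₗ[k] V j))
    {i j l : Q} (p : Quiver.Path i j) (q : Quiver.Path j l) :
    pathMap f (p.comp q) = (pathMap f q).comp (pathMap f p) := by
  induction q with
  | nil => rw [Quiver.Path.comp_nil, pathMap_nil, LinearMap.id_comp]
  | cons q' a ih =>
    rw [Quiver.Path.comp_cons, pathMap_cons, pathMap_cons, ih, LinearMap.comp_assoc]

private lemma pathMap_toPath (f : ∀ {i j : Q}, (i ⟶ j) → (V i →ₗ[k] V j))
    {i j : Q} (a : i ⟶ j) : pathMap f (Quiver.Hom.toPath a) = f a := by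
  simp [Quiver.Hom.toPath, pathMap]

variable [DecidableEq Q]

private def pext {i j : Q} (g : V i →ₗ[k] V j) : Module.End k (∀ m, V m) :=
  (LinearMap.single k V j).comp (g.comp (LinearMap.proj i))

private lemma pext_zero {i j : Q} : pext (k := k) (0 : V i →ₗ[k] V j) = 0 :=
  LinearMap.ext fun x => by simp [pext]

private lemma pext_mul {i c j : Q} (g : V c →ₗ[k] V j) (h : V i →ₗ[k] V c) :
    pext (k := k) g * pext h = pext (g.comp h) := by
  refine LinearMap.ext fun x => ?_
  simp [pext, Module.End.mul_apply, Pi.single_eq_same]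

private lemma pext_mul_ne {i c j d : Q} (hne : c ≠ d) (g : V c →ₗ[k] V j)
    (h : V i →ₗ[k] V d) : pext (k := k) g * pext h = 0 := by
  refine LinearMap.ext fun x => ?_
  simp [pext, Module.End.mul_apply, Pi.single_eq_of_ne hne]

private lemma pext_eq_zero {i j : Q} {g : V i →ₗ[k] V j} (hg : pext (k := k) g = 0) :
    g = 0 := by
  refine LinearMap.ext fun v => ?_
  have := congrArg (fun e : Module.End k (∀ m, V m) => e (Pi.single i v) j) hg
  simpa [pext, Pi.single_eq_same] using this

private lemma pext_pow {i : Q} (g : V i →ₗ[k] V i) (m : ℕ) :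
    (pext (k := k) g) ^ (m + 1) = pext (g ^ (m + 1)) := by
  induction m with
  | zero => rw [pow_one, pow_one]
  | succ m ih =>
    rw [pow_succ', ih, pext_mul, ← Module.End.mul_eq_comp, ← pow_succ']

end Aux

/-- A finite-dimensional representation of a finite quiver is nilpotent (every oriented cycle
acts by a nilpotent endomorphism) iff some power `r` kills all paths of length `≥ r`. -/
theorem stmt4 {k : Type*} [Field k] {Q : Type*} [Quiver Q] [Fintype Q]
    [∀ i j : Q, Fintype (i ⟶ j)] {V : Q → Type*}
    [∀ i, AddCommGroup (V i)] [∀ i, Module k (V i)] [∀ i, FiniteDimensional k (V i)]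
    (f : ∀ {i j : Q}, (i ⟶ j) → (V i →ₗ[k] V j)) :
    (∀ (i : Q) (p : Quiver.Path i i), 0 < p.length → IsNilpotent (pathMap f p)) ↔
      (∃ r : ℕ, 0 < r ∧
        ∀ (i j : Q) (p : Quiver.Path i j), r ≤ p.length → pathMap f p = 0) := by
  classical
  constructor
  · intro h
    set X := ∀ m, V m with hX
    set S : Set (Module.End k X) :=
      {e | e = 0 ∨ ∃ (i j : Q) (p : Quiver.Path i j), 0 < p.length ∧ e = pext (pathMap f p)}
      with hS
    have hmul : ∀ a ∈ S, ∀ b ∈ S, a * b ∈ S := by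
      rintro a (rfl | ⟨i, j, p, hp, rfl⟩) b hb
      · exact Or.inl (zero_mul _)
      rcases hb with rfl | ⟨i', j', p', hp', rfl⟩
      · exact Or.inl (mul_zero _)
      by_cases hm : j' = i
      · subst hm
        refine Or.inr ⟨i', j, p'.comp p, ?_, ?_⟩
        · rw [Quiver.Path.length_comp]; omega
        · rw [pext_mul, ← pathMap_comp]
      · exact Or.inl (pext_mul_ne (fun hh => hm hh.symm) _ _)
    have hnil : ∀ e ∈ S, IsNilpotent e := by
      rintro e (rfl | ⟨i, j, p, hp, rfl⟩)
      · exact ⟨1, pow_one (0 : Module.End k X) ▸ rfl⟩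
      by_cases hij : j = i
      · subst hij
        obtain ⟨m, hm⟩ := h j p hp
        refine ⟨m + 1, ?_⟩
        rw [pext_pow, pow_succ, hm, zero_mul]
        exact pext_zero
      · refine ⟨2, ?_⟩
        rw [pow_two]
        exact pext_mul_ne (fun hh => hij hh.symm) _ _
    have hdecomp : ∀ {i j : Q} (p : Quiver.Path i j), ∃ L : List (Module.End k X),
        (∀ x ∈ L, x ∈ S) ∧ L.length = p.length ∧
        (0 < p.length → L.prod = pext (pathMap f p)) := by
      intro i j p
      induction p with
      | nil => exact ⟨[], by simp, rfl, by simp⟩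
      | cons q a ih =>
        obtain ⟨L, hLmem, hLlen, hLprod⟩ := ih
        rcases Nat.eq_zero_or_pos q.length with hq0 | hqpos
        · refine ⟨[pext (pathMap f (q.cons a))], ?_, ?_, ?_⟩
          · intro x hx
            rw [List.mem_singleton] at hx
            subst hx
            exact Or.inr ⟨_, _, q.cons a, Nat.succ_pos _, rfl⟩
          · simp [Quiver.Path.length_cons, hq0]
          · intro _; simp
        · refine ⟨pext (pathMap f (Quiver.Hom.toPath a)) :: L, ?_, ?_, ?_⟩
          · intro x hx
            rcases List.mem_cons.mp hx with rfl | hx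
            · exact Or.inr ⟨_, _, Quiver.Hom.toPath a, Nat.succ_pos _, rfl⟩
            · exact hLmem x hx
          · simp [hLlen]
          · intro _
            rw [List.prod_cons, hLprod hqpos, pext_mul, pathMap_toPath, ← pathMap_cons]
    refine ⟨Module.finrank k X + 1, Nat.succ_pos _, ?_⟩
    intro i j p hlen
    obtain ⟨L, hLmem, hLlen, hLprod⟩ := hdecomp p
    have hp0 : 0 < p.length := by omega
    have h0 : L.prod = 0 :=
      levitzki (Module.finrank k X) X le_rfl S hmul hnil L hLmem (by omega)
    exact pext_eq_zero (by rw [← hLprod hp0, h0])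
  · rintro ⟨r, hr, hkill⟩ i p hp
    have key : ∀ m : ℕ, ∃ q : Quiver.Path i i,
        q.length = m * p.length ∧ pathMap f q = (pathMap f p) ^ m := by
      intro m
      induction m with
      | zero => exact ⟨Quiver.Path.nil, by simp, by rw [pathMap_nil, pow_zero]; rfl⟩
      | succ m ih =>
        obtain ⟨q, hl, hq⟩ := ih
        refine ⟨q.comp p, ?_, ?_⟩
        · rw [Quiver.Path.length_comp, hl]; ring
        · rw [pathMap_comp, hq, pow_succ', Module.End.mul_eq_comp]
    obtain ⟨q, hl, hq⟩ := key r
    refine ⟨r, ?_⟩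
    rw [← hq]
    apply hkill
    rw [hl]
    calc r = r * 1 := (mul_one r).symm
    _ ≤ r * p.length := Nat.mul_le_mul_left r hp
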